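/- Let (X,T) be a TDS with metric d and μ an ergodic invariant measure. Then for every ε > 0, h̄_μ^{BK}(T,ε) ≤ h_top^P(T, G_μ, d, ε/10), where G_μ is the set of generic points of μ. -/

import Mathlib

open MeasureTheory Filter Set Metric Topology ENNReal

variable {X : Type*} [MetricSpace X]

/-- The `n`-th Bowen metric `d_n(x,y) = max_{0 ≤ j ≤ n-1} d(T^j x, T^j y)`. -/
noncomputable def bowenDist (T : X → X) (n : ℕ) (x y : X) : ℝ :=
  ⨆ j ∈ Finset.range n, dist (T^[j] x) (T^[j] y)

/-- The open Bowen ball of order `n` and radius `ε`. -/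
def bowenBall (T : X → X) (n : ℕ) (x : X) (ε : ℝ) : Set X :=
  {y | bowenDist T n x y < ε}

/-- The closed Bowen ball of order `n` and radius `ε`. -/
def bowenClosedBall (T : X → X) (n : ℕ) (x : X) (ε : ℝ) : Set X :=
  {y | bowenDist T n x y ≤ ε}

/-- `F` is `(n,ε)`-separated. -/
def IsBowenSeparated (T : X → X) (n : ℕ) (ε : ℝ) (F : Set X) : Prop :=
  ∀ x ∈ F, ∀ y ∈ F, x ≠ y → ε < bowenDist T n x y

/-- Maximal cardinality of an `(n,ε)`-separated subset of `Z`. -/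
noncomputable def sepNum (T : X → X) (n : ℕ) (ε : ℝ) (Z : Set X) : ℕ :=
  sSup {k | ∃ F : Finset X, ↑F ⊆ Z ∧ IsBowenSeparated T n ε ↑F ∧ F.card = k}

/-- A finite Borel measurable partition of `X`. -/
def IsMeasPartition [MeasurableSpace X] (P : Finset (Set X)) : Prop :=
  (∀ A ∈ P, MeasurableSet A) ∧ (∀ A ∈ P, ∀ B ∈ P, A ≠ B → Disjoint A B) ∧
    (⋃ A ∈ P, A) = Set.univ

/-- A finite open cover of `X`. -/
def IsOpenCover (U : Finset (Set X)) : Prop :=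
  (∀ A ∈ U, IsOpen A) ∧ (⋃ A ∈ U, A) = Set.univ

/-- The `n`-th join `⋁_{j=0}^{n-1} T^{-j} P` of a finite family of sets. -/
noncomputable def joinPart (T : X → X) (P : Finset (Set X)) (n : ℕ) : Finset (Set X) := by
  classical
  exact (Fintype.piFinset (fun _ : Fin n => P)).image
    (fun f => ⋂ j : Fin n, T^[(j : ℕ)] ⁻¹' f j)

/-- Static entropy of a finite partition. -/
noncomputable def partEntropy [MeasurableSpace X] (μ : Measure X) (P : Finset (Set X)) : ℝ :=
  ∑ A ∈ P, Real.negMulLog (μ A).toReal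

/-- Kolmogorov–Sinai entropy of `T` w.r.t. the partition `P`. -/
noncomputable def ksEntropyPart [MeasurableSpace X] (T : X → X) (μ : Measure X)
    (P : Finset (Set X)) : ℝ :=
  limsup (fun n => partEntropy μ (joinPart T P n) / n) atTop

/-- Kolmogorov–Sinai entropy of `(X,T,μ)`. -/
noncomputable def ksEntropy [MeasurableSpace X] (T : X → X) (μ : Measure X) : ℝ≥0∞ :=
  ⨆ (P : Finset (Set X)) (_ : IsMeasPartition P), ENNReal.ofReal (ksEntropyPart T μ P)

/-- `N_μ(V, c)`: the minimal cardinality of a subfamily of `V` whose union has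
measure at least `c`. -/
noncomputable def coverNum [MeasurableSpace X] (μ : Measure X) (V : Finset (Set X)) (c : ℝ) : ℕ :=
  sInf {k | ∃ W : Finset (Set X), W ⊆ V ∧ W.card = k ∧ ENNReal.ofReal c ≤ μ (⋃ A ∈ W, A)}

/-- Shapira's entropy of the open cover `U` at level `δ`. -/
noncomputable def shapiraEnt [MeasurableSpace X] (T : X → X) (μ : Measure X)
    (U : Finset (Set X)) (δ : ℝ) : ℝ :=
  limsup (fun n => Real.log (coverNum μ (joinPart T U n) δ) / n) atTop

/-- `R_μ^δ(T,n,ε)`: minimal number of Bowen `(n,ε)`-balls whose union has measure `> 1 - δ`. -/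
noncomputable def katokCovNum [MeasurableSpace X] (T : X → X) (μ : Measure X) (n : ℕ)
    (ε δ : ℝ) : ℕ :=
  sInf {k | ∃ E : Finset X, E.card = k ∧
    1 - ENNReal.ofReal δ < μ (⋃ x ∈ E, bowenBall T n x ε)}

/-- Upper Katok `ε`-entropy at level `δ`. -/
noncomputable def katokUpperδ [MeasurableSpace X] (T : X → X) (μ : Measure X) (ε δ : ℝ) : ℝ≥0∞ :=
  limsup (fun n => ENNReal.ofReal (Real.log (katokCovNum T μ n ε δ)) / n) atTop

/-- Lower Katok `ε`-entropy at level `δ`. -/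
noncomputable def katokLowerδ [MeasurableSpace X] (T : X → X) (μ : Measure X) (ε δ : ℝ) : ℝ≥0∞ :=
  liminf (fun n => ENNReal.ofReal (Real.log (katokCovNum T μ n ε δ)) / n) atTop

/-- Upper Katok `ε`-entropy: the limit of `katokUpperδ` as `δ → 0`. -/
noncomputable def katokUpper [MeasurableSpace X] (T : X → X) (μ : Measure X) (ε : ℝ) : ℝ≥0∞ :=
  ⨆ δ ∈ Set.Ioo (0 : ℝ) 1, katokUpperδ T μ ε δ

/-- Lower Katok `ε`-entropy: the limit of `katokLowerδ` as `δ → 0`. -/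
noncomputable def katokLower [MeasurableSpace X] (T : X → X) (μ : Measure X) (ε : ℝ) : ℝ≥0∞ :=
  ⨆ δ ∈ Set.Ioo (0 : ℝ) 1, katokLowerδ T μ ε δ

/-- `-log μ(S)`, as an extended nonnegative real (`∞` when `μ S = 0`). -/
noncomputable def negLogMeas [MeasurableSpace X] (μ : Measure X) (S : Set X) : ℝ≥0∞ :=
  if μ S = 0 then ⊤ else ENNReal.ofReal (-Real.log (μ S).toReal)

/-- Upper Brin–Katok local `ε`-entropy of `μ`. -/
noncomputable def bkUpper [MeasurableSpace X] (T : X → X) (μ : Measure X) (ε : ℝ) : ℝ≥0∞ :=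
  ∫⁻ x, limsup (fun n => negLogMeas μ (bowenBall T n x ε) / n) atTop ∂μ

/-- Lower Brin–Katok local `ε`-entropy of `μ`. -/
noncomputable def bkLower [MeasurableSpace X] (T : X → X) (μ : Measure X) (ε : ℝ) : ℝ≥0∞ :=
  ∫⁻ x, liminf (fun n => negLogMeas μ (bowenBall T n x ε) / n) atTop ∂μ

/-- `∑ e^{-s n_i}` over a family of (center, order) pairs. -/
noncomputable def weightSum (s : ℝ) (I : Set (X × ℕ)) : ℝ≥0∞ :=
  ∑' p : I, ENNReal.ofReal (Real.exp (-(s * ((p : X × ℕ).2 : ℝ))))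

/-- Carathéodory–Pesin Bowen pre-measure `M(T,d,Z,s,N,ε)`. -/
noncomputable def bowenPre (T : X → X) (Z : Set X) (s : ℝ) (N : ℕ) (ε : ℝ) : ℝ≥0∞ :=
  ⨅ (I : Set (X × ℕ)) (_ : I.Countable ∧ (∀ p ∈ I, N ≤ p.2) ∧
      Z ⊆ ⋃ p ∈ I, bowenBall T p.2 p.1 ε), weightSum s I

/-- `M(T,d,Z,s,ε) = lim_{N→∞} M(T,d,Z,s,N,ε)`. -/
noncomputable def bowenCP (T : X → X) (Z : Set X) (s : ℝ) (ε : ℝ) : ℝ≥0∞ :=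
  ⨆ N, bowenPre T Z s N ε

/-- Bowen `ε`-entropy of the subset `Z`: the critical value of `s ↦ M(T,d,Z,s,ε)`. -/
noncomputable def bowenEnt (T : X → X) (Z : Set X) (ε : ℝ) : ℝ≥0∞ :=
  sInf {a : ℝ≥0∞ | ∃ s : ℝ, 0 ≤ s ∧ a = ENNReal.ofReal s ∧ bowenCP T Z s ε = 0}

/-- Packing pre-measure `P(T,d,Z,s,N,ε)`: supremum of `∑ e^{-n_i s}` over pairwise disjoint
families of closed Bowen balls with centers in `Z` and orders `≥ N`. -/
noncomputable def packPre (T : X → X) (Z : Set X) (s : ℝ) (N : ℕ) (ε : ℝ) : ℝ≥0∞ :=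
  ⨆ (I : Set (X × ℕ)) (_ : I.Countable ∧ (∀ p ∈ I, N ≤ p.2 ∧ p.1 ∈ Z) ∧
      I.PairwiseDisjoint (fun p => bowenClosedBall T p.2 p.1 ε)), weightSum s I

/-- `P(T,d,Z,s,ε) = lim_{N→∞} P(T,d,Z,s,N,ε)`. -/
noncomputable def packCP (T : X → X) (Z : Set X) (s : ℝ) (ε : ℝ) : ℝ≥0∞ :=
  ⨅ N, packPre T Z s N ε

/-- `𝒫(T,d,Z,s,ε) = inf {∑_i P(T,d,Z_i,s,ε) : Z ⊆ ⋃ Z_i}`. -/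
noncomputable def packOuter (T : X → X) (Z : Set X) (s : ℝ) (ε : ℝ) : ℝ≥0∞ :=
  ⨅ (Zs : ℕ → Set X) (_ : Z ⊆ ⋃ i, Zs i), ∑' i, packCP T (Zs i) s ε

/-- Packing `ε`-entropy of the subset `Z`: critical value of `s ↦ 𝒫(T,d,Z,s,ε)`. -/
noncomputable def packEnt (T : X → X) (Z : Set X) (ε : ℝ) : ℝ≥0∞ :=
  sInf {a : ℝ≥0∞ | ∃ s : ℝ, 0 ≤ s ∧ a = ENNReal.ofReal s ∧ packOuter T Z s ε = 0}

/-- Packing topological entropy of a subset: `lim_{ε → 0} h_top^P(T,Z,d,ε)`. -/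
noncomputable def packEntTotal (T : X → X) (Z : Set X) : ℝ≥0∞ :=
  ⨆ (ε : ℝ) (_ : 0 < ε), packEnt T Z ε

/-- Katok-type Bowen pre-measure `M^δ(T,d,μ,s,N,ε)` for a measure `μ`. -/
noncomputable def bowenPreMeas [MeasurableSpace X] (T : X → X) (μ : Measure X) (s : ℝ)
    (N : ℕ) (ε δ : ℝ) : ℝ≥0∞ :=
  ⨅ (I : Set (X × ℕ)) (_ : I.Countable ∧ (∀ p ∈ I, N ≤ p.2) ∧
      1 - ENNReal.ofReal δ < μ (⋃ p ∈ I, bowenBall T p.2 p.1 ε)), weightSum s I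

/-- The critical value `M^δ(T,d,μ,ε)`. -/
noncomputable def bowenEntMeasδ [MeasurableSpace X] (T : X → X) (μ : Measure X)
    (ε δ : ℝ) : ℝ≥0∞ :=
  sInf {a : ℝ≥0∞ | ∃ s : ℝ, 0 ≤ s ∧ a = ENNReal.ofReal s ∧
    (⨆ N, bowenPreMeas T μ s N ε δ) = 0}

/-- `M_μ(T,d,ε) = lim_{δ → 0} M^δ(T,d,μ,ε)`. -/
noncomputable def bowenEntMeas [MeasurableSpace X] (T : X → X) (μ : Measure X) (ε : ℝ) : ℝ≥0∞ :=
  ⨆ δ ∈ Set.Ioo (0 : ℝ) 1, bowenEntMeasδ T μ ε δ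

/-- `𝒫^δ(T,d,μ,s,ε) = inf {∑_i P(T,d,Z_i,s,ε) : μ(⋃ Z_i) > 1 - δ}`. -/
noncomputable def packOuterMeas [MeasurableSpace X] (T : X → X) (μ : Measure X) (s : ℝ)
    (ε δ : ℝ) : ℝ≥0∞ :=
  ⨅ (Zs : ℕ → Set X) (_ : 1 - ENNReal.ofReal δ < μ (⋃ i, Zs i)), ∑' i, packCP T (Zs i) s ε

/-- The critical value `𝒫^δ(T,d,μ,ε)`. -/
noncomputable def packEntMeasδ [MeasurableSpace X] (T : X → X) (μ : Measure X)
    (ε δ : ℝ) : ℝ≥0∞ :=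
  sInf {a : ℝ≥0∞ | ∃ s : ℝ, 0 ≤ s ∧ a = ENNReal.ofReal s ∧ packOuterMeas T μ s ε δ = 0}

/-- `𝒫_μ(T,d,ε) = lim_{δ → 0} 𝒫^δ(T,d,μ,ε)`. -/
noncomputable def packEntMeas [MeasurableSpace X] (T : X → X) (μ : Measure X) (ε : ℝ) : ℝ≥0∞ :=
  ⨆ δ ∈ Set.Ioo (0 : ℝ) 1, packEntMeasδ T μ ε δ

/-- The `n`-th empirical measure `(1/n) ∑_{j=0}^{n-1} δ_{T^j x}`. -/
noncomputable def empMeas [MeasurableSpace X] (T : X → X) (x : X) (n : ℕ) : Measure X :=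
  (n : ℝ≥0∞)⁻¹ • ∑ j ∈ Finset.range n, Measure.dirac (T^[j] x)

set_option linter.unusedSectionVars false in
lemma empMeas_finite [MeasurableSpace X] (T : X → X) (x : X) (n : ℕ) :
    IsFiniteMeasure (empMeas T x n) := by
  refine ⟨?_⟩
  have h : (∑ j ∈ Finset.range n, Measure.dirac (T^[j] x)) Set.univ = n := by
    rw [Measure.finset_sum_apply]
    simp
  rw [empMeas, Measure.smul_apply, smul_eq_mul, h]
  rcases eq_or_ne (n : ℝ≥0∞) 0 with h0 | h0
  · simp [h0]
  · rw [ENNReal.inv_mul_cancel h0 (by simp)]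
    exact ENNReal.one_lt_top

/-- The `n`-th empirical measure as a finite measure. -/
noncomputable def empFM [MeasurableSpace X] (T : X → X) (x : X) (n : ℕ) : FiniteMeasure X :=
  ⟨empMeas T x n, empMeas_finite T x n⟩

/-- The set of generic points of `μ`: points whose empirical measures converge weakly to `μ`. -/
def genPts [MeasurableSpace X] [OpensMeasurableSpace X] (T : X → X) (μ : Measure X) [IsFiniteMeasure μ] : Set X :=
  {x | Tendsto (fun n => empFM T x n) atTop (𝓝 (⟨μ, ‹_›⟩ : FiniteMeasure X))}

/-- `X_{n,F}`: points whose `n`-th empirical measure lies in `F`. -/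
def XnF [MeasurableSpace X] [OpensMeasurableSpace X] (T : X → X) (F : Set (FiniteMeasure X)) (n : ℕ) : Set X :=
  {x | empFM T x n ∈ F}

/-- Pfister–Sullivan `ε`-entropy of `μ`. -/
noncomputable def psEnt [MeasurableSpace X] [OpensMeasurableSpace X] (T : X → X) (μ : Measure X) [IsFiniteMeasure μ]
    (ε : ℝ) : ℝ≥0∞ :=
  ⨅ (F : Set (FiniteMeasure X)) (_ : F ∈ 𝓝 (show FiniteMeasure X from ⟨μ, ‹_›⟩)),
    limsup (fun n => ENNReal.ofReal (Real.log (sepNum T n ε (XnF T F n)) / n)) atTop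

/-- `limsup_{ε → 0⁺} f(ε)/log(1/ε)`. -/
noncomputable def mmUpper (f : ℝ → ℝ≥0∞) : ℝ≥0∞ :=
  limsup (fun ε : ℝ => f ε / ENNReal.ofReal (Real.log (1 / ε))) (𝓝[>] (0 : ℝ))

/-- `liminf_{ε → 0⁺} f(ε)/log(1/ε)`. -/
noncomputable def mmLower (f : ℝ → ℝ≥0∞) : ℝ≥0∞ :=
  liminf (fun ε : ℝ => f ε / ENNReal.ofReal (Real.log (1 / ε))) (𝓝[>] (0 : ℝ))

/-- Bowen upper metric mean dimension of a subset. -/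
noncomputable def mdimBUpper (T : X → X) (Z : Set X) : ℝ≥0∞ :=
  mmUpper (fun ε => bowenEnt T Z ε)

/-- Packing upper metric mean dimension of a subset. -/
noncomputable def mdimPUpper (T : X → X) (Z : Set X) : ℝ≥0∞ :=
  mmUpper (fun ε => packEnt T Z ε)

/-- Packing lower metric mean dimension of a subset. -/
noncomputable def mdimPLower (T : X → X) (Z : Set X) : ℝ≥0∞ :=
  mmLower (fun ε => packEnt T Z ε)


/-! ### Auxiliary lemmas -/

section A
variable (T : X → X) (n : ℕ) (x y z : X)

private lemma bdd_aux : BddAbove (Set.range fun j => ⨆ (_ : j ∈ Finset.range n), dist (T^[j] x) (T^[j] y)) := by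
  apply Set.Finite.bddAbove
  have : (Set.range fun j => ⨆ (_ : j ∈ Finset.range n), dist (T^[j] x) (T^[j] y)) ⊆
      insert (0:ℝ) ((fun j => dist (T^[j] x) (T^[j] y)) '' (Finset.range n : Set ℕ)) := by
    rintro r ⟨j, rfl⟩
    by_cases hj : j ∈ Finset.range n
    · right
      refine ⟨j, by simpa using hj, ?_⟩
      simp only []
      rw [ciSup_pos hj]
    · left; simp [hj, Real.iSup_of_isEmpty]
  exact Set.Finite.subset (((Finset.range n : Set ℕ).toFinite.image _).insert 0) this

lemma bowenDist_le {c : ℝ} (h0 : 0 ≤ c) (h : ∀ j < n, dist (T^[j] x) (T^[j] y) ≤ c) :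
    bowenDist T n x y ≤ c := by
  refine ciSup_le fun j => ?_
  by_cases hj : j ∈ Finset.range n
  · rw [ciSup_pos hj]; exact h j (Finset.mem_range.1 hj)
  · simp only [hj]; rw [Real.iSup_of_isEmpty]; exact h0

lemma dist_le_bowenDist {j : ℕ} (hj : j < n) :
    dist (T^[j] x) (T^[j] y) ≤ bowenDist T n x y := by
  have := le_ciSup (bdd_aux T n x y) j
  rwa [ciSup_pos (Finset.mem_range.2 hj)] at this

lemma bowenDist_nonneg : 0 ≤ bowenDist T n x y := by
  have := le_ciSup (bdd_aux T n x y) n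
  refine le_trans ?_ this
  simp [Real.iSup_of_isEmpty]

lemma bowenDist_comm : bowenDist T n x y = bowenDist T n y x := by
  unfold bowenDist; simp_rw [dist_comm]

lemma bowenDist_self : bowenDist T n x x = 0 :=
  le_antisymm (bowenDist_le T n x x le_rfl (fun j _ => by simp)) (bowenDist_nonneg T n x x)

lemma bowenDist_triangle :
    bowenDist T n x z ≤ bowenDist T n x y + bowenDist T n y z := by
  refine bowenDist_le T n x z
    (add_nonneg (bowenDist_nonneg T n x y) (bowenDist_nonneg T n y z)) fun j hj => ?_
  exact (dist_triangle _ (T^[j] y) _).trans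
    (add_le_add (dist_le_bowenDist T n x y hj) (dist_le_bowenDist T n y z hj))

lemma bowenClosedBall_disjoint {r ε' : ℝ} (h2 : 2 * r ≤ ε') (hxy : ε' < bowenDist T n x y) :
    Disjoint (bowenClosedBall T n x r) (bowenClosedBall T n y r) := by
  rw [Set.disjoint_left]
  intro w hw hw'
  have h1 : bowenDist T n x y ≤ bowenDist T n x w + bowenDist T n w y := bowenDist_triangle T n x w y
  rw [bowenDist_comm T n w y] at h1
  have : bowenDist T n x y ≤ 2 * r := by
    calc bowenDist T n x y ≤ _ + _ := h1
    _ ≤ r + r := add_le_add hw hw'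
    _ = 2 * r := by ring
  linarith

/-- Maximal `r`-separated subset of `A`, via Zorn. -/
lemma exists_maximal_separated (A : Set X) {r : ℝ} (hr : 0 ≤ r) :
    ∃ F ⊆ A, (F.Pairwise fun a b => r < bowenDist T n a b) ∧
      ∀ y ∈ A, ∃ a ∈ F, bowenDist T n a y ≤ r := by
  obtain ⟨F, hF⟩ := zorn_subset
      {F | F ⊆ A ∧ F.Pairwise fun a b => r < bowenDist T n a b} (fun c hc hchain => by
    refine ⟨⋃₀ c, ⟨?_, ?_⟩, fun s hs => subset_sUnion_of_mem hs⟩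
    · exact sUnion_subset fun s hs => (hc hs).1
    · intro a ha b hb hab
      obtain ⟨s, hs, has⟩ := ha
      obtain ⟨t, ht, hbt⟩ := hb
      rcases hchain.total hs ht with h | h
      · exact (hc ht).2 (h has) hbt hab
      · exact (hc hs).2 has (h hbt) hab)
  obtain ⟨⟨hFA, hFsep⟩, hmax⟩ := hF
  refine ⟨F, hFA, hFsep, fun y hy => ?_⟩
  by_contra hcon
  push_neg at hcon
  have hyF : y ∉ F := fun hyF => by
    have := hcon y hyF; rw [bowenDist_self] at this; exact absurd hr (not_le.2 this)
  have : insert y F ∈ {F | F ⊆ A ∧ F.Pairwise fun a b => r < bowenDist T n a b} := by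
    constructor
    · exact insert_subset hy hFA
    · intro a ha b hb hab
      rcases ha with rfl | ha
      · rcases hb with rfl | hb
        · exact absurd rfl hab
        · rw [bowenDist_comm]; exact not_le.1 fun h => absurd (hcon b hb) (not_lt.2 h)
      · rcases hb with rfl | hb
        · exact not_le.1 fun h => absurd (hcon a ha) (not_lt.2 h)
        · exact hFsep ha hb hab
  have := hmax this (subset_insert y F)
  exact hyF (this (mem_insert y F))
end A


section B
variable {X : Type*} [MetricSpace X]

lemma weightSum_pairs (s : ℝ) (G : Finset X) (n : ℕ) (I : Set (X × ℕ))
    (hI : I = (fun a => (a, n)) '' ↑G) :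
    weightSum s I = G.card * ENNReal.ofReal (Real.exp (-(s * n))) := by
  subst hI
  have h := tsum_image (f := fun p : X × ℕ => ENNReal.ofReal (Real.exp (-(s * p.2))))
    (g := fun a : X => (a, n)) (s := (↑G : Set X))
    (Set.injOn_of_injective (fun a b h => congrArg Prod.fst h))
  rw [weightSum]
  refine h.trans ?_
  rw [tsum_fintype]
  simp [Finset.card_univ, mul_comm]

lemma packPre_antitone (T : X → X) (Z : Set X) (s : ℝ) (ε : ℝ) {N M : ℕ} (h : N ≤ M) :
    packPre T Z s M ε ≤ packPre T Z s N ε := by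
  refine iSup₂_le fun I hI => ?_
  exact le_iSup₂_of_le I ⟨hI.1, fun p hp => ⟨h.trans (hI.2.1 p hp).1, (hI.2.1 p hp).2⟩, hI.2.2⟩ le_rfl

lemma one_le_packPre [MeasurableSpace X] (T : X → X) (μ : Measure X) [IsProbabilityMeasure μ]
    {Z W : Set X} {s θ ε : ℝ} (hs : 0 ≤ s) (hθ : 0 < θ) (hε : 0 < ε)
    {n N : ℕ} (hn : 1 ≤ n) (hNn : N ≤ n) (hWZ : W ⊆ Z)
    (hball : ∀ x ∈ W, μ (bowenBall T n x ε) ≤ ENNReal.ofReal (Real.exp (-((s+θ)*n))))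
    (hWbig : ENNReal.ofReal (Real.exp (-(θ*n))) ≤ μ W) :
    1 ≤ packPre T Z s N (ε/10) := by
  classical
  obtain ⟨F, hFW, hFsep, hFmax⟩ := exists_maximal_separated T n W (r := ε/5) (by linarith)
  -- in both cases, get a finite separated G ⊆ W with 1 ≤ card * e^{-sn}
  have key : ∃ G : Finset X, ↑G ⊆ W ∧ ((G : Set X).Pairwise fun a b => ε/5 < bowenDist T n a b) ∧
      (1 : ℝ≥0∞) ≤ G.card * ENNReal.ofReal (Real.exp (-(s*n))) := by
    have e1 : ENNReal.ofReal (Real.exp (s*n)) * ENNReal.ofReal (Real.exp (-(s*n))) = 1 := by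
      rw [← ENNReal.ofReal_mul (Real.exp_nonneg _), ← Real.exp_add]
      simp
    rcases Set.finite_or_infinite F with hfin | hinf
    · refine ⟨hfin.toFinset, by simpa using hFW, by simpa using hFsep, ?_⟩
      have hcov : W ⊆ ⋃ a ∈ hfin.toFinset, bowenBall T n a ε := by
        intro y hy
        obtain ⟨a, haF, hay⟩ := hFmax y hy
        exact Set.mem_biUnion (hfin.mem_toFinset.2 haF) (by simp only [bowenBall, Set.mem_setOf_eq]; linarith)
      have h1 : μ W ≤ (hfin.toFinset.card : ℝ≥0∞) * ENNReal.ofReal (Real.exp (-((s+θ)*n))) := by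
        refine (measure_mono hcov).trans ((measure_biUnion_finset_le _ _).trans ?_)
        calc ∑ a ∈ hfin.toFinset, μ (bowenBall T n a ε)
            ≤ ∑ _a ∈ hfin.toFinset, ENNReal.ofReal (Real.exp (-((s+θ)*n))) :=
              Finset.sum_le_sum fun a ha => hball a (hFW (hfin.mem_toFinset.1 ha))
          _ = _ := by rw [Finset.sum_const, nsmul_eq_mul]
      have h2 : ENNReal.ofReal (Real.exp (-(θ*n))) ≤
          (hfin.toFinset.card : ℝ≥0∞) * ENNReal.ofReal (Real.exp (-((s+θ)*n))) := hWbig.trans h1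
      have e2 : ENNReal.ofReal (Real.exp (θ*n)) * ENNReal.ofReal (Real.exp (-(θ*n))) = 1 := by
        rw [← ENNReal.ofReal_mul (Real.exp_nonneg _), ← Real.exp_add]; simp
      have e3 : ENNReal.ofReal (Real.exp (θ*n)) * ENNReal.ofReal (Real.exp (-((s+θ)*n)))
          = ENNReal.ofReal (Real.exp (-(s*n))) := by
        rw [← ENNReal.ofReal_mul (Real.exp_nonneg _), ← Real.exp_add]; ring_nf
      calc (1:ℝ≥0∞) = ENNReal.ofReal (Real.exp (θ*n)) * ENNReal.ofReal (Real.exp (-(θ*n))) := e2.symm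
        _ ≤ ENNReal.ofReal (Real.exp (θ*n)) * ((hfin.toFinset.card : ℝ≥0∞) * ENNReal.ofReal (Real.exp (-((s+θ)*n)))) :=
            mul_le_mul_right h2 _
        _ = (hfin.toFinset.card : ℝ≥0∞) * (ENNReal.ofReal (Real.exp (θ*n)) * ENNReal.ofReal (Real.exp (-((s+θ)*n)))) := by ring
        _ = _ := by rw [e3]
    · obtain ⟨G, hGF, hGcard⟩ := hinf.exists_subset_card_eq (⌈Real.exp (s*n)⌉₊ + 1)
      refine ⟨G, (Set.Subset.trans hGF hFW), hFsep.mono hGF, ?_⟩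
      have : ENNReal.ofReal (Real.exp (s*n)) ≤ (G.card : ℝ≥0∞) := by
        rw [hGcard]
        calc ENNReal.ofReal (Real.exp (s*n)) ≤ ENNReal.ofReal ((⌈Real.exp (s*n)⌉₊ + 1 : ℕ) : ℝ) :=
            ENNReal.ofReal_le_ofReal (by push_cast; linarith [Nat.le_ceil (Real.exp (s*n))])
          _ = _ := ENNReal.ofReal_natCast _
      calc (1:ℝ≥0∞) = ENNReal.ofReal (Real.exp (s*n)) * ENNReal.ofReal (Real.exp (-(s*n))) := e1.symm
        _ ≤ _ := mul_le_mul_left this _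
  obtain ⟨G, hGW, hGsep, hGcount⟩ := key
  set I : Set (X × ℕ) := (fun a => (a, n)) '' ↑G with hI
  have hcond : I.Countable ∧ (∀ p ∈ I, N ≤ p.2 ∧ p.1 ∈ Z) ∧
      I.PairwiseDisjoint (fun p => bowenClosedBall T p.2 p.1 (ε/10)) := by
    refine ⟨(G.countable_toSet.image _), fun p hp => ?_, fun p hp q hq hpq => ?_⟩
    · obtain ⟨a, ha, rfl⟩ := hp
      exact ⟨hNn, hWZ (hGW ha)⟩
    · obtain ⟨a, ha, rfl⟩ := hp
      obtain ⟨b, hb, rfl⟩ := hq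
      have hab : a ≠ b := fun h => hpq (by rw [h])
      exact bowenClosedBall_disjoint T n a b (by linarith) (hGsep ha hb hab)
  calc (1:ℝ≥0∞) ≤ G.card * ENNReal.ofReal (Real.exp (-(s*n))) := hGcount
    _ = weightSum s I := (weightSum_pairs s G n I hI).symm
    _ ≤ packPre T Z s N (ε/10) := le_iSup₂_of_le I hcond le_rfl

lemma exists_good_n [MeasurableSpace X] (μ : Measure X) {W : Set X} {θ : ℝ} (hθ : 0 < θ)
    (En : ℕ → Set X) (hcover : ∀ M : ℕ, 1 ≤ M → W ⊆ ⋃ k, En (M + k)) (hγ : 0 < μ W) :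
    ∀ N : ℕ, ∃ n, N ≤ n ∧ 1 ≤ n ∧ ENNReal.ofReal (Real.exp (-(θ*n))) ≤ μ (En n) := by
  set r : ℝ≥0∞ := ENNReal.ofReal (Real.exp (-θ)) with hr
  have hrpow : ∀ m : ℕ, r ^ m = ENNReal.ofReal (Real.exp (-(θ*m))) := by
    intro m
    rw [hr, ← ENNReal.ofReal_pow (Real.exp_nonneg _), ← Real.exp_nat_mul]
    ring_nf
  have hr1 : r < 1 := by
    rw [hr, ← ENNReal.ofReal_one]
    exact ENNReal.ofReal_lt_ofReal_iff_of_nonneg (Real.exp_nonneg _) |>.2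
      (Real.exp_lt_one_iff.2 (by linarith))
  have hC : (1 - r)⁻¹ ≠ ⊤ := by
    rw [Ne, ENNReal.inv_eq_top, tsub_eq_zero_iff_le]
    exact fun h => absurd hr1 (not_lt.2 h)
  have htend : Tendsto (fun M : ℕ => r ^ M * (1 - r)⁻¹) atTop (𝓝 0) := by
    have := ENNReal.Tendsto.mul_const (ENNReal.tendsto_pow_atTop_nhds_zero_of_lt_one hr1)
      (Or.inr hC)
    simpa using this
  obtain ⟨M₀, hM₀⟩ := (htend.eventually_lt_const hγ).exists_forall_of_atTop
  intro N
  by_contra hcon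
  push_neg at hcon
  set M : ℕ := max (max N M₀) 1 with hM
  have hcov := hcover M (le_max_right _ _)
  have hbound : ∀ k : ℕ, μ (En (M + k)) ≤ r ^ (M + k) := by
    intro k
    rw [hrpow]
    exact (hcon (M + k)
      (le_trans (le_trans (le_max_left N M₀) (le_max_left _ 1)) (Nat.le_add_right M k))
      (le_trans (le_max_right _ 1) (Nat.le_add_right M k))).le
  have : μ W ≤ r ^ M * (1 - r)⁻¹ := by
    calc μ W ≤ μ (⋃ k, En (M + k)) := measure_mono hcov
      _ ≤ ∑' k, μ (En (M + k)) := measure_iUnion_le _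
      _ ≤ ∑' k : ℕ, r ^ (M + k) := ENNReal.tsum_le_tsum hbound
      _ = r ^ M * ∑' k : ℕ, r ^ k := by simp_rw [pow_add]; rw [ENNReal.tsum_mul_left]
      _ = r ^ M * (1 - r)⁻¹ := by rw [ENNReal.tsum_geometric]
  exact absurd (lt_of_le_of_lt this (hM₀ M (le_trans (le_max_right N M₀) (le_max_left _ 1)))) (lt_irrefl _)

lemma freq_small_ball [MeasurableSpace X] (T : X → X) (μ : Measure X) [IsProbabilityMeasure μ]
    {s θ ε : ℝ} (hs : 0 ≤ s) (hθ : 0 < θ) {x : X}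
    (hx : ENNReal.ofReal (s+θ) < limsup (fun n => negLogMeas μ (bowenBall T n x ε) / n) atTop) :
    ∀ M : ℕ, ∃ n, M ≤ n ∧ 1 ≤ n ∧
      μ (bowenBall T n x ε) ≤ ENNReal.ofReal (Real.exp (-((s+θ)*n))) := by
  have hfreq : ∃ᶠ n in atTop, ENNReal.ofReal (s+θ) < negLogMeas μ (bowenBall T n x ε) / n := by
    by_contra h
    rw [Filter.not_frequently] at h
    have : limsup (fun n => negLogMeas μ (bowenBall T n x ε) / n) atTop ≤ ENNReal.ofReal (s+θ) :=
      limsup_le_of_le (by isBoundedDefault) (h.mono fun n hn => not_lt.1 hn)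
    exact absurd hx (not_lt.2 this)
  intro M
  obtain ⟨n, hn, hlt⟩ := (frequently_atTop.1 hfreq) (max M 1)
  refine ⟨n, le_trans (le_max_left M 1) hn, le_trans (le_max_right M 1) hn, ?_⟩
  set B := bowenBall T n x ε with hB
  rcases eq_or_ne (μ B) 0 with h0 | h0
  · rw [h0]; exact zero_le
  have hne : μ B ≠ ⊤ := measure_ne_top μ B
  have hnlm : negLogMeas μ B = ENNReal.ofReal (-Real.log (μ B).toReal) := by
    rw [negLogMeas, if_neg h0]
  have hn0 : (n : ℝ≥0∞) ≠ 0 := by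
    simp only [Ne, Nat.cast_eq_zero]
    omega
  have hmul : ENNReal.ofReal (s+θ) * n < negLogMeas μ B := by
    rw [← ENNReal.lt_div_iff_mul_lt (Or.inl hn0) (Or.inl (ENNReal.natCast_ne_top n))]
    exact hlt
  rw [hnlm, ← ENNReal.ofReal_natCast, ← ENNReal.ofReal_mul (by linarith)] at hmul
  have hreal : (s+θ) * n < -Real.log (μ B).toReal :=
    (ENNReal.ofReal_lt_ofReal_iff_of_nonneg (by positivity)).1 hmul
  have ht : 0 < (μ B).toReal := ENNReal.toReal_pos h0 hne
  have : (μ B).toReal < Real.exp (-((s+θ)*n)) := by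
    calc (μ B).toReal = Real.exp (Real.log (μ B).toReal) := (Real.exp_log ht).symm
      _ < Real.exp (-((s+θ)*n)) := Real.exp_lt_exp.2 (by linarith)
  calc μ B = ENNReal.ofReal (μ B).toReal := (ENNReal.ofReal_toReal hne).symm
    _ ≤ ENNReal.ofReal (Real.exp (-((s+θ)*n))) := ENNReal.ofReal_le_ofReal this.le

end B


set_option linter.unusedSectionVars false
set_option maxHeartbeats 1000000

section MaxS
variable (T : X → X) (g : X → ℝ)

noncomputable def maxS : ℕ → X → ℝ
  | 0 => fun _ => 0
  | (N+1) => fun x => max (birkhoffSum T g (N+1) x) (maxS N x)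

lemma maxS_nonneg (N : ℕ) (x : X) : 0 ≤ maxS T g N x := by
  induction N with
  | zero => exact le_rfl
  | succ N ih => exact ih.trans (le_max_right _ _)

lemma maxS_mono {N M : ℕ} (h : N ≤ M) (x : X) : maxS T g N x ≤ maxS T g M x := by
  have : Monotone (fun N => maxS T g N x) :=
    monotone_nat_of_le_succ fun N => le_max_right _ _
  exact this h

lemma birkhoffSum_le_maxS {n N : ℕ} (h : n ≤ N) (x : X) :
    birkhoffSum T g n x ≤ maxS T g N x := by
  induction N with
  | zero => simp only [Nat.le_zero.1 h, birkhoffSum_zero]; exact le_rfl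
  | succ N ih =>
    rcases Nat.lt_or_ge n (N+1) with h' | h'
    · exact (ih (Nat.lt_succ_iff.1 h')).trans (le_max_right _ _)
    · have : n = N + 1 := le_antisymm h h'
      subst this
      exact le_max_left _ _

lemma measurable_birkhoffSum [MeasurableSpace X] (hT : Measurable T) (hg : Measurable g) (n : ℕ) :
    Measurable (birkhoffSum T g n) := by
  unfold birkhoffSum
  exact Finset.measurable_sum _ fun k _ => hg.comp (hT.iterate k)

lemma measurable_maxS [MeasurableSpace X] (hT : Measurable T) (hg : Measurable g) (N : ℕ) :
    Measurable (maxS T g N) := by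
  induction N with
  | zero => exact measurable_const
  | succ N ih => exact (measurable_birkhoffSum T g hT hg (N+1)).max ih

lemma abs_birkhoffSum_le {C : ℝ} (hC : ∀ x, |g x| ≤ C) (n : ℕ) (x : X) :
    |birkhoffSum T g n x| ≤ n * C := by
  calc |birkhoffSum T g n x| ≤ ∑ k ∈ Finset.range n, |g (T^[k] x)| :=
      Finset.abs_sum_le_sum_abs _ _
    _ ≤ ∑ _k ∈ Finset.range n, C := Finset.sum_le_sum fun k _ => hC _
    _ = n * C := by rw [Finset.sum_const, Finset.card_range, nsmul_eq_mul]

lemma maxS_le {C : ℝ} (hC0 : 0 ≤ C) (hC : ∀ x, |g x| ≤ C) (N : ℕ) (x : X) :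
    maxS T g N x ≤ N * C := by
  induction N with
  | zero => simp [maxS]
  | succ N ih =>
    refine max_le ((abs_le.1 (abs_birkhoffSum_le T g hC (N+1) x)).2) (ih.trans ?_)
    have : (N : ℝ) ≤ (N : ℝ) + 1 := by linarith
    push_cast
    nlinarith

lemma maxS_key (N : ℕ) (x : X) :
    maxS T g N x ≤ max 0 (g x + maxS T g N (T x)) := by
  induction N with
  | zero => exact le_max_left _ _
  | succ N ih =>
    refine max_le ?_ ?_
    · rw [birkhoffSum_succ']
      refine le_max_of_le_right (add_le_add le_rfl ?_)
      exact birkhoffSum_le_maxS T g (Nat.le_succ N) (T x)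
    · exact ih.trans (max_le_max le_rfl (add_le_add le_rfl (maxS_mono T g (Nat.le_succ N) (T x))))

end MaxS

section MaxErg
variable [MeasurableSpace X] [BorelSpace X]
variable {T : X → X} {μ : Measure X} [IsProbabilityMeasure μ]

lemma integrable_of_bounded {g : X → ℝ} (hgm : Measurable g) {C : ℝ}
    (hC : ∀ x, |g x| ≤ C) : Integrable g μ := by
  refine (integrable_const C).mono' hgm.aestronglyMeasurable ?_
  exact ae_of_all _ fun x => by rw [Real.norm_eq_abs]; exact hC x

theorem maximal_ergodic (hT : Measurable T) (hTμ : MeasurePreserving T μ μ)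
    {g : X → ℝ} (hgm : Measurable g) {C : ℝ} (hC0 : 0 ≤ C) (hC : ∀ x, |g x| ≤ C) (N : ℕ) :
    0 ≤ ∫ x in {x | 0 < maxS T g N x}, g x ∂μ := by
  set A := {x | 0 < maxS T g N x} with hA
  have hAm : MeasurableSet A := measurableSet_lt measurable_const (measurable_maxS T g hT hgm N)
  have hgi : Integrable g μ := integrable_of_bounded hgm hC
  have hMm : Measurable (maxS T g N) := measurable_maxS T g hT hgm N
  have hMi : Integrable (maxS T g N) μ := by
    refine integrable_of_bounded hMm (C := N * C) fun x => ?_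
    rw [abs_of_nonneg (maxS_nonneg T g N x)]
    exact maxS_le T g hC0 hC N x
  have hMTi : Integrable (fun x => maxS T g N (T x)) μ := (MeasurePreserving.integrable_comp hTμ hMm.aestronglyMeasurable).2 hMi
  have key : ∀ x ∈ A, maxS T g N x ≤ g x + maxS T g N (T x) := by
    intro x hx
    have h := maxS_key T g N x
    rcases le_max_iff.1 h with h' | h'
    · exact absurd hx (by simp only [hA, Set.mem_setOf_eq, not_lt]; exact h')
    · exact h'
  have h1 : ∫ x, maxS T g N x ∂μ = ∫ x in A, maxS T g N x ∂μ := by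
    refine (setIntegral_eq_integral_of_forall_compl_eq_zero fun x hx => ?_).symm
    exact le_antisymm (not_lt.1 hx) (maxS_nonneg T g N x)
  have h2 : ∫ x in A, maxS T g N x ∂μ ≤ ∫ x in A, (g x + maxS T g N (T x)) ∂μ := by
    refine setIntegral_mono_on hMi.integrableOn (hgi.add hMTi).integrableOn hAm key
  have h3 : ∫ x in A, (g x + maxS T g N (T x)) ∂μ
      = ∫ x in A, g x ∂μ + ∫ x in A, maxS T g N (T x) ∂μ :=
    integral_add hgi.integrableOn hMTi.integrableOn
  have h4 : ∫ x in A, maxS T g N (T x) ∂μ ≤ ∫ x, maxS T g N (T x) ∂μ :=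
    setIntegral_le_integral hMTi (ae_of_all _ fun x => maxS_nonneg T g N (T x))
  have h5 : ∫ x, maxS T g N (T x) ∂μ = ∫ x, maxS T g N x ∂μ := by
    conv_rhs => rw [← hTμ.map_eq]
    exact (integral_map hT.aemeasurable hMm.aestronglyMeasurable).symm
  linarith
end MaxErg

set_option linter.unusedSectionVars false
set_option maxHeartbeats 1000000
section LimsupAux
variable {u v : ℕ → ℝ} {C : ℝ}

lemma bddAbove_of_abs (hu : ∀ n, |u n| ≤ C) : IsBoundedUnder (· ≤ ·) atTop u :=
  isBoundedUnder_of ⟨C, fun n => (abs_le.1 (hu n)).2⟩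

lemma bddBelow_of_abs (hu : ∀ n, |u n| ≤ C) : IsBoundedUnder (· ≥ ·) atTop u :=
  isBoundedUnder_of ⟨-C, fun n => (abs_le.1 (hu n)).1⟩

lemma limsup_le_limsup_of_sub (hu : ∀ n, |u n| ≤ C) (hv : ∀ n, |v n| ≤ C)
    (h : Tendsto (fun n => u n - v n) atTop (𝓝 0)) :
    limsup u atTop ≤ limsup v atTop := by
  refine le_of_forall_pos_le_add fun ε hε => ?_
  have h1 : ∀ᶠ n in atTop, |u n - v n| < ε / 2 := by
    have := h.eventually (Metric.ball_mem_nhds (0:ℝ) (by positivity : (0:ℝ) < ε/2))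
    refine this.mono fun n hn => ?_
    simpa [Real.dist_eq] using hn
  have h2 : ∀ᶠ n in atTop, v n < limsup v atTop + ε / 2 := by
    refine eventually_lt_of_limsup_lt ?_ (bddAbove_of_abs hv)
    linarith [lt_add_of_pos_right (limsup v atTop) (by positivity : (0:ℝ) < ε/2)]
  refine limsup_le_of_le ((bddBelow_of_abs hu).isCoboundedUnder_le) ?_
  filter_upwards [h1, h2] with n hn1 hn2
  have := (abs_lt.1 hn1).2
  linarith

lemma limsup_eq_limsup_of_sub (hu : ∀ n, |u n| ≤ C) (hv : ∀ n, |v n| ≤ C)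
    (h : Tendsto (fun n => u n - v n) atTop (𝓝 0)) :
    limsup u atTop = limsup v atTop :=
  le_antisymm (limsup_le_limsup_of_sub hu hv h)
    (limsup_le_limsup_of_sub hv hu (by simpa using h.neg))

end LimsupAux

section Avg
variable {X : Type*} [MetricSpace X] (T : X → X) (g : X → ℝ)

lemma abs_avg_le {C : ℝ} (hC0 : 0 ≤ C) (hC : ∀ x, |g x| ≤ C) (n : ℕ) (x : X) :
    |birkhoffSum T g n x / n| ≤ C := by
  rcases Nat.eq_zero_or_pos n with rfl | hn
  · simp [birkhoffSum_zero, hC0]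
  · rw [abs_div, abs_of_nonneg (by positivity : (0:ℝ) ≤ (n:ℝ))]
    rw [div_le_iff₀ (by exact_mod_cast hn : (0:ℝ) < (n:ℝ))]
    calc |birkhoffSum T g n x| ≤ n * C := abs_birkhoffSum_le T g hC n x
      _ = C * n := mul_comm _ _

lemma limsup_avg_comp {C : ℝ} (hC0 : 0 ≤ C) (hC : ∀ x, |g x| ≤ C) (x : X) :
    limsup (fun n => birkhoffSum T g n (T x) / n) atTop
      = limsup (fun n => birkhoffSum T g n x / n) atTop := by
  refine limsup_eq_limsup_of_sub (C := C) (fun n => abs_avg_le T g hC0 hC n (T x))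
    (fun n => abs_avg_le T g hC0 hC n x) ?_
  have key : ∀ n : ℕ, birkhoffSum T g n (T x) - birkhoffSum T g n x
      = g (T^[n] x) - g x := by
    intro n
    have h1 := birkhoffSum_succ T g n x
    have h2 := birkhoffSum_succ' T g n x
    linarith [h1, h2]
  have hb : ∀ n : ℕ, ‖birkhoffSum T g n (T x) / n - birkhoffSum T g n x / n‖ ≤ 2 * C / n := by
    intro n
    rcases Nat.eq_zero_or_pos n with rfl | hn
    · simp
    · rw [div_sub_div_same, Real.norm_eq_abs, abs_div,
        abs_of_nonneg (by positivity : (0:ℝ) ≤ (n:ℝ)), key n]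
      have h2C : |g (T^[n] x) - g x| ≤ 2 * C := by
        calc |g (T^[n] x) - g x| ≤ |g (T^[n] x)| + |g x| := abs_sub _ _
          _ ≤ 2 * C := by linarith [hC (T^[n] x), hC x]
      gcongr
  refine squeeze_zero_norm hb ?_
  simpa using tendsto_const_div_atTop_nhds_zero_nat (2 * C)
end Avg

section ErgThm
variable {X : Type*} [MetricSpace X] [CompactSpace X] [MeasurableSpace X] [BorelSpace X]
variable {T : X → X} {μ : Measure X} [IsProbabilityMeasure μ]

lemma le_liminf_of_limsup_neg_le {u : ℕ → ℝ} {C c : ℝ} (hu : ∀ n, |u n| ≤ C)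
    (h : limsup (fun n => -u n) atTop ≤ -c) : c ≤ liminf u atTop := by
  have hb : ∀ n, |-u n| ≤ C := fun n => by rw [abs_neg]; exact hu n
  refine le_of_forall_pos_le_add fun ε hε => ?_
  have h1 : ∀ᶠ n in atTop, -u n < -c + ε :=
    eventually_lt_of_limsup_lt (lt_of_le_of_lt h (by linarith)) (bddAbove_of_abs hb)
  have h2 : c - ε ≤ liminf u atTop := by
    refine le_liminf_of_le ((bddAbove_of_abs hu).isCoboundedUnder_ge) ?_
    exact h1.mono fun n hn => by linarith
  linarith

lemma measurable_limsup_gt (hT : Measurable T) {g : X → ℝ} (hg : Measurable g)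
    {C : ℝ} (hC0 : 0 ≤ C) (hC : ∀ x, |g x| ≤ C) (a : ℝ) :
    MeasurableSet {x | a < limsup (fun n => birkhoffSum T g n x / n) atTop} := by
  have hset : {x | a < limsup (fun n => birkhoffSum T g n x / n) atTop}
      = ⋃ q : ℚ, ({x : X | a < (q:ℝ)} ∩
          ⋂ N : ℕ, ⋃ n : ℕ, ⋃ (_ : N ≤ n), {x | (q:ℝ) ≤ birkhoffSum T g n x / n}) := by
    ext x
    simp only [Set.mem_setOf_eq, Set.mem_iUnion, Set.mem_inter_iff, Set.mem_iInter]
    constructor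
    · intro hx
      obtain ⟨q, hq1, hq2⟩ := exists_rat_btwn hx
      refine ⟨q, hq1, fun N => ?_⟩
      have hfreq : ∃ᶠ n in atTop, (q:ℝ) < birkhoffSum T g n x / n :=
        frequently_lt_of_lt_limsup
          ((bddBelow_of_abs (fun n => abs_avg_le T g hC0 hC n x)).isCoboundedUnder_le) hq2
      obtain ⟨n, hn, h⟩ := frequently_atTop.1 hfreq N
      exact ⟨n, hn, h.le⟩
    · rintro ⟨q, hq1, hq2⟩
      have hfreq : ∃ᶠ n in atTop, (q:ℝ) ≤ birkhoffSum T g n x / n :=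
        frequently_atTop.2 fun N => by
          obtain ⟨n, hn, h⟩ := hq2 N
          exact ⟨n, hn, h⟩
      exact lt_of_lt_of_le hq1
        (le_limsup_of_frequently_le hfreq (bddAbove_of_abs (fun n => abs_avg_le T g hC0 hC n x)))
  rw [hset]
  refine MeasurableSet.iUnion fun q => (MeasurableSet.const _).inter ?_
  refine MeasurableSet.iInter fun N => MeasurableSet.iUnion fun n => MeasurableSet.iUnion fun _ => ?_
  exact measurableSet_le measurable_const ((measurable_birkhoffSum T g hT hg n).div_const _)

lemma birkhoffSum_sub_const (T : X → X) (g : X → ℝ) (a : ℝ) (n : ℕ) (x : X) :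
    birkhoffSum T (fun y => g y - a) n x = birkhoffSum T g n x - n * a := by
  unfold birkhoffSum
  rw [Finset.sum_sub_distrib, Finset.sum_const, Finset.card_range, nsmul_eq_mul]

theorem ae_limsup_avg_le (hT : Continuous T) (hμ : Ergodic T μ) (f : BoundedContinuousFunction X ℝ) :
    ∀ᵐ x ∂μ, limsup (fun n => birkhoffSum T (⇑f) n x / n) atTop ≤ ∫ y, f y ∂μ := by
  set C : ℝ := ‖f‖ with hCdef
  have hC : ∀ x, |f x| ≤ C := fun x => by
    rw [← Real.norm_eq_abs]; exact f.norm_coe_le_norm x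
  have hC0 : 0 ≤ C := norm_nonneg f
  have hfm : Measurable (⇑f) := f.continuous.measurable
  have key : ∀ a : ℝ, (∫ y, f y ∂μ) < a →
      μ {x | a < limsup (fun n => birkhoffSum T (⇑f) n x / n) atTop} = 0 := by
    intro a ha
    set A := {x | a < limsup (fun n => birkhoffSum T (⇑f) n x / n) atTop} with hAdef
    have hAm : MeasurableSet A := measurable_limsup_gt hT.measurable hfm hC0 hC a
    have hinv : T ⁻¹' A = A := by
      ext x
      simp only [hAdef, Set.mem_preimage, Set.mem_setOf_eq]
      rw [limsup_avg_comp T (⇑f) hC0 hC x]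
    rcases hμ.ae_empty_or_univ hAm hinv with h | h
    · exact ae_eq_empty.1 h
    · exfalso
      set g' : X → ℝ := fun y => f y - a with hg'def
      have hg'm : Measurable g' := hfm.sub measurable_const
      have hC' : ∀ x, |g' x| ≤ C + |a| := fun x => by
        calc |g' x| ≤ |f x| + |a| := abs_sub _ _
          _ ≤ C + |a| := by linarith [hC x]
      have hC'0 : (0:ℝ) ≤ C + |a| := by positivity
      set B : ℕ → Set X := fun N => {x | 0 < maxS T g' N x} with hBdef
      have hBm : ∀ N, MeasurableSet (B N) := fun N =>
        measurableSet_lt measurable_const (measurable_maxS T g' hT.measurable hg'm N)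
      have hBmono : Monotone B := fun N M h x hx => lt_of_lt_of_le hx (maxS_mono T g' h x)
      have hAB : A ⊆ ⋃ N, B N := by
        intro x hx
        have hfreq : ∃ᶠ n in atTop, a < birkhoffSum T (⇑f) n x / n :=
          frequently_lt_of_lt_limsup
            ((bddBelow_of_abs (fun n => abs_avg_le T (⇑f) hC0 hC n x)).isCoboundedUnder_le) hx
        obtain ⟨n, hn, hlt⟩ := frequently_atTop.1 hfreq 1
        have hn' : (0:ℝ) < (n:ℝ) := by exact_mod_cast hn
        refine Set.mem_iUnion.2 ⟨n, ?_⟩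
        have h1 : (n:ℝ) * a < birkhoffSum T (⇑f) n x := by
          rw [lt_div_iff₀ hn'] at hlt
          linarith
        have h2 : birkhoffSum T g' n x = birkhoffSum T (⇑f) n x - n * a :=
          birkhoffSum_sub_const T (⇑f) a n x
        show 0 < maxS T g' n x
        calc (0:ℝ) < birkhoffSum T g' n x := by rw [h2]; linarith
          _ ≤ maxS T g' n x := birkhoffSum_le_maxS T g' le_rfl x
      have hg'i : Integrable g' μ := integrable_of_bounded hg'm hC'
      have hint0 : ∀ N, 0 ≤ ∫ x in B N, g' x ∂μ := fun N =>
        maximal_ergodic hT.measurable hμ.toMeasurePreserving hg'm hC'0 hC' N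
      have htend := tendsto_setIntegral_of_monotone hBm hBmono hg'i.integrableOn
      have hlim : 0 ≤ ∫ x in ⋃ N, B N, g' x ∂μ := ge_of_tendsto' htend hint0
      have hU : μ (⋃ N, B N)ᶜ = 0 :=
        measure_mono_null (Set.compl_subset_compl.2 hAB) (ae_eq_univ.1 h)
      have hUeq : ∫ x in ⋃ N, B N, g' x ∂μ = ∫ x, g' x ∂μ := by
        rw [setIntegral_congr_set (ae_eq_univ.2 hU), setIntegral_univ]
      have hval : ∫ x, g' x ∂μ = (∫ y, f y ∂μ) - a := by
        rw [hg'def]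
        rw [integral_sub (f.integrable μ) (integrable_const a), integral_const]
        simp
      rw [hUeq, hval] at hlim
      linarith
  rw [ae_iff]
  set U : Set X := ⋃ q : ℚ,
      ({x : X | (∫ y, f y ∂μ) < (q:ℝ)} ∩
        {x | (q:ℝ) < limsup (fun n => birkhoffSum T (⇑f) n x / n) atTop}) with hUdef
  have hsub : {x | ¬ limsup (fun n => birkhoffSum T (⇑f) n x / n) atTop ≤ ∫ y, f y ∂μ} ⊆ U := by
    intro x hx
    simp only [Set.mem_setOf_eq, not_le] at hx
    obtain ⟨q, hq1, hq2⟩ := exists_rat_btwn hx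
    exact Set.mem_iUnion.2 ⟨q, hq1, hq2⟩
  have hnull : μ U = 0 := by
    refine measure_iUnion_null fun q => ?_
    rcases lt_or_ge (∫ y, f y ∂μ) (q:ℝ) with h | h
    · exact measure_mono_null Set.inter_subset_right (key q h)
    · have : ({x : X | (∫ y, f y ∂μ) < (q:ℝ)} ∩
          {x | (q:ℝ) < limsup (fun n => birkhoffSum T (⇑f) n x / n) atTop}) = ∅ := by
        ext x
        simp only [Set.mem_inter_iff, Set.mem_setOf_eq, Set.mem_empty_iff_false, iff_false,
          not_and]
        intro hx
        exact absurd hx (not_lt.2 h)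
      rw [this, measure_empty]
  exact measure_mono_null hsub hnull

theorem ae_tendsto_avg (hT : Continuous T) (hμ : Ergodic T μ) (f : BoundedContinuousFunction X ℝ) :
    ∀ᵐ x ∂μ, Tendsto (fun n => birkhoffSum T (⇑f) n x / n) atTop (𝓝 (∫ y, f y ∂μ)) := by
  have hC : ∀ x, |f x| ≤ ‖f‖ := fun x => by
    rw [← Real.norm_eq_abs]; exact f.norm_coe_le_norm x
  have hC0 : (0:ℝ) ≤ ‖f‖ := norm_nonneg f
  have hnegC : ∀ x, |(-f : BoundedContinuousFunction X ℝ) x| ≤ ‖f‖ := fun x => by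
    simp only [BoundedContinuousFunction.coe_neg, Pi.neg_apply, abs_neg]
    exact hC x
  filter_upwards [ae_limsup_avg_le hT hμ f, ae_limsup_avg_le hT hμ (-f)] with x h1 h2
  have havg : ∀ n, |birkhoffSum T (⇑f) n x / n| ≤ ‖f‖ := fun n => abs_avg_le T (⇑f) hC0 hC n x
  have hneg : (fun n : ℕ => birkhoffSum T (⇑(-f : BoundedContinuousFunction X ℝ)) n x / n)
      = fun n : ℕ => -(birkhoffSum T (⇑f) n x / n) := by
    funext n
    have : birkhoffSum T (⇑(-f : BoundedContinuousFunction X ℝ)) n x = -birkhoffSum T (⇑f) n x := by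
      unfold birkhoffSum
      simp [BoundedContinuousFunction.coe_neg]
    rw [this, neg_div]
  have hintneg : ∫ y, (-f : BoundedContinuousFunction X ℝ) y ∂μ = -∫ y, f y ∂μ := by
    simp only [BoundedContinuousFunction.coe_neg, Pi.neg_apply]
    exact integral_neg _
  rw [hneg, hintneg] at h2
  have hliminf : (∫ y, f y ∂μ) ≤ liminf (fun n => birkhoffSum T (⇑f) n x / n) atTop :=
    le_liminf_of_limsup_neg_le havg h2
  exact tendsto_of_le_liminf_of_limsup_le hliminf h1
    (bddAbove_of_abs havg) (bddBelow_of_abs havg)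
end ErgThm

section Generic
variable {X : Type*} [MetricSpace X] [CompactSpace X] [MeasurableSpace X] [BorelSpace X]
variable (T : X → X) (μ : Measure X) [IsProbabilityMeasure μ]

lemma integral_empMeas (x : X) (n : ℕ) (f : BoundedContinuousFunction X ℝ) :
    ∫ y, f y ∂(empMeas T x n) = (n:ℝ)⁻¹ * ∑ j ∈ Finset.range n, f (T^[j] x) := by
  rw [empMeas, integral_smul_measure,
    integral_finset_sum_measure (fun j _ => f.integrable _)]
  simp only [integral_dirac, smul_eq_mul, ENNReal.toReal_inv, ENNReal.toReal_natCast]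

theorem ae_mem_genPts (hT : Continuous T) (hμ : Ergodic T μ) :
    ∀ᵐ x ∂μ, x ∈ genPts T μ := by
  obtain ⟨D, hDc, hDd⟩ := TopologicalSpace.exists_countable_dense C(X, ℝ)
  have hae : ∀ᵐ x ∂μ, ∀ g ∈ D, Tendsto (fun n => birkhoffSum T (⇑g) n x / n) atTop
      (𝓝 (∫ y, g y ∂μ)) := by
    rw [MeasureTheory.ae_ball_iff hDc]
    intro g hg
    have := ae_tendsto_avg hT hμ (BoundedContinuousFunction.mkOfCompact g)
    exact this
  filter_upwards [hae] with x hx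
  rw [genPts, Set.mem_setOf_eq]
  apply FiniteMeasure.tendsto_iff_forall_integral_tendsto.2
  intro f
  show Tendsto (fun n => ∫ y, f y ∂(empMeas T x n)) atTop (𝓝 (∫ y, f y ∂μ))
  refine Metric.tendsto_atTop.2 fun ε hε => ?_
  obtain ⟨g, hgD, hgdist⟩ : ∃ g ∈ D, dist f.toContinuousMap g < ε/3 := by
    have hcl : f.toContinuousMap ∈ closure D := hDd _
    obtain ⟨g, hgD, hd⟩ := Metric.mem_closure_iff.1 hcl (ε/3) (by positivity)
    exact ⟨g, hgD, hd⟩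
  have hpt : ∀ y, |f y - g y| ≤ dist f.toContinuousMap g := fun y => by
    rw [← Real.dist_eq]
    exact ContinuousMap.dist_apply_le_dist y
  have hgint : Integrable (⇑g) μ := by
    have := (BoundedContinuousFunction.mkOfCompact g).integrable μ
    exact this
  obtain ⟨N, hN⟩ := Metric.tendsto_atTop.1 (hx g hgD) (ε/3) (by positivity)
  refine ⟨max N 1, fun n hn => ?_⟩
  have hnN : N ≤ n := le_trans (le_max_left _ _) hn
  have hn1 : 1 ≤ n := le_trans (le_max_right _ _) hn
  have hn0 : (0:ℝ) < (n:ℝ) := by exact_mod_cast hn1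
  have e1 : ∫ y, f y ∂(empMeas T x n) = (n:ℝ)⁻¹ * ∑ j ∈ Finset.range n, f (T^[j] x) :=
    integral_empMeas T x n f
  have e2 : birkhoffSum T (⇑g) n x / n = (n:ℝ)⁻¹ * ∑ j ∈ Finset.range n, g (T^[j] x) := by
    rw [div_eq_inv_mul]; rfl
  have bound1 : |(n:ℝ)⁻¹ * ∑ j ∈ Finset.range n, f (T^[j] x)
      - (n:ℝ)⁻¹ * ∑ j ∈ Finset.range n, g (T^[j] x)| ≤ ε/3 := by
    rw [← mul_sub, ← Finset.sum_sub_distrib, abs_mul,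
      abs_of_nonneg (by positivity : (0:ℝ) ≤ (n:ℝ)⁻¹)]
    have habs : |∑ j ∈ Finset.range n, (f (T^[j] x) - g (T^[j] x))| ≤ n * (ε/3) := by
      calc |∑ j ∈ Finset.range n, (f (T^[j] x) - g (T^[j] x))|
          ≤ ∑ j ∈ Finset.range n, |f (T^[j] x) - g (T^[j] x)| := Finset.abs_sum_le_sum_abs _ _
        _ ≤ ∑ _j ∈ Finset.range n, (ε/3) :=
            Finset.sum_le_sum fun j _ => le_of_lt (lt_of_le_of_lt (hpt _) hgdist)
        _ = n * (ε/3) := by rw [Finset.sum_const, Finset.card_range, nsmul_eq_mul]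
    calc (n:ℝ)⁻¹ * |∑ j ∈ Finset.range n, (f (T^[j] x) - g (T^[j] x))|
        ≤ (n:ℝ)⁻¹ * (n * (ε/3)) := by
          exact mul_le_mul_of_nonneg_left habs (by positivity)
      _ = ε/3 := by field_simp
  have bound2 : |(∫ y, g y ∂μ) - ∫ y, f y ∂μ| ≤ ε/3 := by
    rw [← integral_sub hgint (f.integrable μ)]
    calc |∫ y, (g y - f y) ∂μ| ≤ ∫ y, |g y - f y| ∂μ := by
          have := norm_integral_le_integral_norm (f := fun y => g y - f y) (μ := μ)
          simpa [Real.norm_eq_abs] using this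
      _ ≤ ∫ _y, (ε/3) ∂μ := by
          refine integral_mono (hgint.sub (f.integrable μ)).abs (integrable_const _) fun y => ?_
          rw [abs_sub_comm]
          exact le_of_lt (lt_of_le_of_lt (hpt y) hgdist)
      _ = ε/3 := by simp
  have bound3 : |birkhoffSum T (⇑g) n x / n - ∫ y, g y ∂μ| < ε/3 := by
    have := hN n hnN
    rwa [Real.dist_eq] at this
  rw [Real.dist_eq, e1]
  have hsplit : |(n:ℝ)⁻¹ * ∑ j ∈ Finset.range n, f (T^[j] x) - ∫ y, f y ∂μ|
      ≤ |(n:ℝ)⁻¹ * ∑ j ∈ Finset.range n, f (T^[j] x)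
          - (n:ℝ)⁻¹ * ∑ j ∈ Finset.range n, g (T^[j] x)|
        + |birkhoffSum T (⇑g) n x / n - ∫ y, g y ∂μ|
        + |(∫ y, g y ∂μ) - ∫ y, f y ∂μ| := by
    rw [e2]
    have := abs_sub_le ((n:ℝ)⁻¹ * ∑ j ∈ Finset.range n, f (T^[j] x))
      ((n:ℝ)⁻¹ * ∑ j ∈ Finset.range n, g (T^[j] x)) (∫ y, f y ∂μ)
    have h2 := abs_sub_le ((n:ℝ)⁻¹ * ∑ j ∈ Finset.range n, g (T^[j] x))
      (∫ y, g y ∂μ) (∫ y, f y ∂μ)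
    linarith
  linarith
end Generic

/-- `h̄_μ^{BK}(T,ε) ≤ h_top^P(T, G_μ, d, ε/10)` for ergodic `μ`. -/
theorem stmt_12 {X : Type*} [MetricSpace X] [CompactSpace X] [MeasurableSpace X] [BorelSpace X]
    (T : X → X) (hT : Continuous T) (μ : Measure X) [IsProbabilityMeasure μ]
    (hμ : Ergodic T μ) (ε : ℝ) (hε : 0 < ε) :
    bkUpper T μ ε ≤ packEnt T (genPts T μ) (ε / 10) := by
  refine le_sInf fun a ha => ?_
  obtain ⟨s, hs, rfl, hpack⟩ := ha
  by_contra hlt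
  push_neg at hlt
  -- extract θ and a positive-measure set E where the local entropy exceeds s + θ
  have hθex : ∃ k : ℕ, 0 < μ {x | ENNReal.ofReal (s + 1/(k+1)) <
      limsup (fun n => negLogMeas μ (bowenBall T n x ε) / n) atTop} := by
    by_contra hk
    push_neg at hk
    simp only [nonpos_iff_eq_zero] at hk
    have hae : ∀ᵐ x ∂μ, limsup (fun n => negLogMeas μ (bowenBall T n x ε) / n) atTop
        ≤ ENNReal.ofReal s := by
      rw [ae_iff]
      have hsub : {x | ¬ limsup (fun n => negLogMeas μ (bowenBall T n x ε) / n) atTop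
            ≤ ENNReal.ofReal s} ⊆
          ⋃ k : ℕ, {x | ENNReal.ofReal (s + 1/(k+1)) <
            limsup (fun n => negLogMeas μ (bowenBall T n x ε) / n) atTop} := by
        intro x hx
        simp only [Set.mem_setOf_eq, not_le] at hx
        have htd : Tendsto (fun k : ℕ => ENNReal.ofReal (s + 1/(k+1))) atTop
            (𝓝 (ENNReal.ofReal s)) := by
          have h0 : Tendsto (fun k : ℕ => s + 1/(k+1)) atTop (𝓝 s) := by
            have := tendsto_one_div_add_atTop_nhds_zero_nat (𝕜 := ℝ)
            have := (tendsto_const_nhds (x := s) (f := atTop)).add this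
            simpa using this
          exact (ENNReal.continuous_ofReal.tendsto s).comp h0
        obtain ⟨k, hklt⟩ := (htd.eventually_lt_const hx).exists
        exact Set.mem_iUnion.2 ⟨k, hklt⟩
      exact measure_mono_null hsub (measure_iUnion_null fun k => hk k)
    have hbk : bkUpper T μ ε ≤ ENNReal.ofReal s := by
      rw [bkUpper]
      calc ∫⁻ x, limsup (fun n => negLogMeas μ (bowenBall T n x ε) / n) atTop ∂μ
          ≤ ∫⁻ _x, ENNReal.ofReal s ∂μ := lintegral_mono_ae hae
        _ = ENNReal.ofReal s := by rw [lintegral_const, measure_univ, mul_one]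
    exact absurd hlt (not_lt.2 hbk)
  obtain ⟨k, hE⟩ := hθex
  have hθpos : (0:ℝ) < 1/(k+1) := by positivity
  -- a.e. genericity
  have hGen : μ {x | x ∉ genPts T μ} = 0 := by
    have := ae_mem_genPts T μ hT hμ
    rwa [ae_iff] at this
  -- main estimate : 1 ≤ packOuter
  have hone : (1 : ℝ≥0∞) ≤ packOuter T (genPts T μ) s (ε/10) := by
    rw [packOuter]
    refine le_iInf fun Zs => le_iInf fun hZs => ?_
    set E := {x | ENNReal.ofReal (s + 1/(k+1)) <
      limsup (fun n => negLogMeas μ (bowenBall T n x ε) / n) atTop} with hEdef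
    have hEG : 0 < μ (E ∩ genPts T μ) := by
      have h1 : μ E ≤ μ (E ∩ genPts T μ) := by
        calc μ E ≤ μ ((E ∩ genPts T μ) ∪ {x | x ∉ genPts T μ}) := by
              refine measure_mono fun x hx => ?_
              by_cases hg : x ∈ genPts T μ
              · exact Or.inl ⟨hx, hg⟩
              · exact Or.inr hg
          _ ≤ μ (E ∩ genPts T μ) + μ {x | x ∉ genPts T μ} := measure_union_le _ _
          _ = μ (E ∩ genPts T μ) := by rw [hGen, add_zero]
      exact lt_of_lt_of_le hE h1
    have hex : ∃ i, 0 < μ (E ∩ genPts T μ ∩ Zs i) := by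
      by_contra h
      push_neg at h
      simp only [nonpos_iff_eq_zero] at h
      have hcup : μ (E ∩ genPts T μ) ≤ ∑' i, μ (E ∩ genPts T μ ∩ Zs i) := by
        calc μ (E ∩ genPts T μ) ≤ μ (⋃ i, E ∩ genPts T μ ∩ Zs i) := by
              refine measure_mono fun x hx => ?_
              obtain ⟨i, hi⟩ := Set.mem_iUnion.1 (hZs hx.2)
              exact Set.mem_iUnion.2 ⟨i, hx, hi⟩
          _ ≤ ∑' i, μ (E ∩ genPts T μ ∩ Zs i) := measure_iUnion_le _
      rw [tsum_congr h, tsum_zero] at hcup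
      exact absurd (lt_of_lt_of_le hEG hcup) (lt_irrefl _)
    obtain ⟨i₀, hi₀⟩ := hex
    have hpc : 1 ≤ packCP T (Zs i₀) s (ε/10) := by
      rw [packCP]
      refine le_iInf fun N => ?_
      set En : ℕ → Set X := fun n => {x ∈ E ∩ genPts T μ ∩ Zs i₀ |
        μ (bowenBall T n x ε) ≤ ENNReal.ofReal (Real.exp (-((s + 1/(k+1))*n)))} with hEn
      have hcover : ∀ M : ℕ, 1 ≤ M → E ∩ genPts T μ ∩ Zs i₀ ⊆ ⋃ j, En (M + j) := by
        intro M _ x hx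
        have hxE : ENNReal.ofReal (s + 1/(k+1)) <
            limsup (fun n => negLogMeas μ (bowenBall T n x ε) / n) atTop := hx.1.1
        obtain ⟨n, hnM, _, hball⟩ := freq_small_ball T μ hs hθpos hxE M
        refine Set.mem_iUnion.2 ⟨n - M, ?_⟩
        have hMn : M + (n - M) = n := by omega
        rw [hMn]
        exact ⟨hx, hball⟩
      obtain ⟨n, hNn, hn1, hbig⟩ := exists_good_n μ hθpos En hcover hi₀ N
      refine one_le_packPre T μ hs hθpos hε hn1 hNn ?_ ?_ hbig
      · exact fun x hx => hx.1.2
      · exact fun x hx => hx.2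
    calc (1:ℝ≥0∞) ≤ packCP T (Zs i₀) s (ε/10) := hpc
      _ ≤ ∑' i, packCP T (Zs i) s (ε/10) := ENNReal.le_tsum i₀
  rw [hpack] at hone
  exact absurd hone (by simp)
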